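/- arXiv:1712.03906 — 2 statements merged into one kernel-verified Lean document; each statement's English description precedes it below -/
import Mathlib

section
/- Let X be a locally compact Hausdorff space. The collection of countable subsets of X that are closed and discrete in X forms a P-ideal if and only if the point at infinity of the one-point compactification of X is an α₁-point. -/
open Filter Topology Set OnePoint
open Filter Topology Set

/-- `x` is an α₁-point: for every countable family of sequences converging to `x`
there is a single sequence converging to `x` whose range almost contains the range
of each member of the family. -/
def IsAlphaOnePoint {X : Type*} [TopologicalSpace X] (x : X) : Prop :=
  ∀ σ : ℕ → ℕ → X, (∀ n, Tendsto (σ n) atTop (𝓝 x)) →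
    ∃ τ : ℕ → X, Tendsto τ atTop (𝓝 x) ∧ ∀ n, (Set.range (σ n) \ Set.range τ).Finite

/-- `P` is a P-ideal of countable sets: an ideal of countable sets such that every
countable subfamily has a `⊆*`-upper bound in `P`. -/
def IsPIdeal {X : Type*} (P : Set (Set X)) : Prop :=
  (∀ A ∈ P, A.Countable) ∧
  (∀ A ∈ P, ∀ B ⊆ A, B ∈ P) ∧
  (∀ A ∈ P, ∀ B ∈ P, A ∪ B ∈ P) ∧
  (∀ Q ⊆ P, Q.Countable → ∃ A ∈ P, ∀ B ∈ Q, (B \ A).Finite)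

section Helpers
variable {X : Type*} [TopologicalSpace X] [T2Space X] [LocallyCompactSpace X]

/-- closed discrete iff finite intersection with compacts -/
lemma lem1 {S : Set X} :
    (IsClosed S ∧ DiscreteTopology S) ↔ ∀ K : Set X, IsCompact K → (S ∩ K).Finite := by
  constructor
  · rintro ⟨hcl, hds⟩ K hK
    have hc : IsCompact (S ∩ K) := hK.inter_left hcl
    haveI : DiscreteTopology (S ∩ K : Set X) := hds.of_subset (inter_subset_left)
    exact hc.finite (isDiscrete_iff_discreteTopology.mpr ‹_›)
  · intro h
    rw [← isDiscrete_iff_discreteTopology, isClosed_and_discrete_iff]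
    intro x
    obtain ⟨K, hKc, hKn⟩ := exists_compact_mem_nhds x
    have hF : ((S ∩ K) \ {x}).Finite := (h K hKc).diff (t := {x})
    have hFc : IsClosed ((S ∩ K) \ {x}) := hF.isClosed
    rw [disjoint_principal_right]
    rw [mem_nhdsWithin]
    refine ⟨interior K ∩ ((S ∩ K) \ {x})ᶜ, isOpen_interior.inter hFc.isOpen_compl,
      ⟨mem_interior_iff_mem_nhds.mpr hKn, by simp⟩, ?_⟩
    rintro y ⟨⟨hyK, hyF⟩, hyx⟩ hyS
    exact hyF ⟨⟨hyS, interior_subset hyK⟩, hyx⟩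

lemma lem2 {u : ℕ → OnePoint X} :
    Tendsto u atTop (𝓝 ∞) ↔ ∀ K : Set X, IsCompact K → {n | u n ∈ (↑) '' K}.Finite := by
  rw [OnePoint.hasBasis_nhds_infty.tendsto_right_iff, ← Nat.cofinite_eq_atTop]
  constructor
  · intro h K hK
    have h2 := eventually_cofinite.mp (h K ⟨hK.isClosed, hK⟩)
    refine h2.subset fun n hn => ?_
    intro hmem
    obtain ⟨x, hx, hxe⟩ := hn
    rcases hmem with ⟨y, hy, hye⟩ | hinf
    · exact hy (OnePoint.coe_injective (hye.trans hxe.symm) ▸ hx)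
    · exact (OnePoint.coe_ne_infty x) (hxe.trans hinf)
  · rintro h K ⟨hKcl, hKc⟩
    rw [eventually_cofinite]
    refine (h K hKc).subset fun n hn => ?_
    simp only [mem_setOf_eq, mem_union, mem_image, mem_compl_iff, mem_singleton_iff, not_or,
      not_exists, not_and] at hn ⊢
    obtain ⟨x, hx⟩ := OnePoint.ne_infty_iff_exists.mp hn.2
    refine ⟨x, ?_, hx⟩
    by_contra hxK
    exact hn.1 x hxK hx

lemma lem5 {u : ℕ → OnePoint X} (hu : Tendsto u atTop (𝓝 ∞)) :
    (((↑) ⁻¹' (range u) : Set X)).Countable ∧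
      ∀ K : Set X, IsCompact K → (((↑) ⁻¹' (range u) : Set X) ∩ K).Finite := by
  refine ⟨(countable_range u).preimage OnePoint.coe_injective, fun K hK => ?_⟩
  have hF : {n | u n ∈ (↑) '' K}.Finite := lem2.mp hu K hK
  have hsub : ((↑) ⁻¹' (range u) : Set X) ∩ K ⊆ (↑) ⁻¹' (u '' {n | u n ∈ (↑) '' K}) := by
    rintro x ⟨⟨n, hn⟩, hxK⟩
    refine ⟨n, ?_, hn⟩
    show u n ∈ OnePoint.some '' K
    rw [hn]
    exact ⟨x, hxK, rfl⟩
  exact (((hF.image u)).preimage OnePoint.coe_injective.injOn).subset hsub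

lemma lem4 {A : Set X} (hc : A.Countable) (hfin : ∀ K : Set X, IsCompact K → (A ∩ K).Finite) :
    ∃ τ : ℕ → OnePoint X, Tendsto τ atTop (𝓝 ∞) ∧ (↑) '' A ⊆ range τ := by
  by_cases hA : A.Finite
  · classical
    set l := hA.toFinset.toList with hl
    refine ⟨fun n => if h : n < l.length then (l.get ⟨n, h⟩ : OnePoint X) else ∞, ?_, ?_⟩
    · refine tendsto_const_nhds.congr' ?_
      filter_upwards [eventually_ge_atTop l.length] with n hn
      simp [Nat.not_lt.mpr hn]
    · rintro y ⟨x, hx, rfl⟩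
      have hxl : x ∈ l := by simp [hl, hx]
      obtain ⟨i, hi⟩ := List.get_of_mem hxl
      refine ⟨i.1, ?_⟩
      simp only [i.isLt, dif_pos]
      exact congrArg _ hi
  · haveI : Countable A := hc.to_subtype
    haveI : Infinite A := Set.infinite_coe_iff.mpr hA
    haveI : Denumerable A := (nonempty_denumerable_iff.mpr ⟨‹_›, ‹_›⟩).some
    set e := Denumerable.eqv A
    refine ⟨fun n => ((e.symm n : X) : OnePoint X), ?_, ?_⟩
    · rw [lem2]
      intro K hK
      have hinj : Function.Injective fun n => (e.symm n : X) :=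
        Subtype.val_injective.comp e.symm.injective
      have : {n | ((e.symm n : X) : OnePoint X) ∈ (↑) '' K} = (fun n => (e.symm n : X)) ⁻¹' (A ∩ K) := by
        ext n
        simp only [mem_setOf_eq, mem_preimage, mem_inter_iff,
          OnePoint.coe_injective.mem_set_image]
        exact ⟨fun h => ⟨(e.symm n).2, h⟩, fun h => h.2⟩
      rw [this]
      exact (hfin K hK).preimage hinj.injOn
    · rintro y ⟨x, hx, rfl⟩
      exact ⟨e ⟨x, hx⟩, by simp⟩

end Helpers

/-- For a locally compact Hausdorff space `X`, the countable closed discrete subsets of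
`X` form a P-ideal iff the point at infinity of the one-point compactification of `X`
is an α₁-point. -/
theorem pIdeal_iff_alpha1_at_infty {X : Type*} [TopologicalSpace X] [T2Space X]
    [LocallyCompactSpace X] :
    IsPIdeal {A : Set X | A.Countable ∧ IsClosed A ∧ DiscreteTopology A} ↔
      IsAlphaOnePoint (OnePoint.infty : OnePoint X) := by
  constructor
  · intro hP σ hσ
    set B : ℕ → Set X := fun n => (↑) ⁻¹' (range (σ n)) with hB
    have hBn : ∀ n, B n ∈ {A : Set X | A.Countable ∧ IsClosed A ∧ DiscreteTopology A} := by
      intro n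
      obtain ⟨h1, h2⟩ := lem5 (hσ n)
      exact ⟨h1, lem1.mpr h2⟩
    obtain ⟨A, hA, hAB⟩ := hP.2.2.2 (range B) (range_subset_iff.mpr hBn) (countable_range B)
    obtain ⟨τ, hτ, hcov⟩ := lem4 hA.1 (lem1.mp hA.2)
    refine ⟨τ, hτ, fun n => ?_⟩
    have h1 : (B n \ A).Finite := hAB (B n) (mem_range_self n)
    refine ((h1.image ((↑) : X → OnePoint X)).insert ∞).subset ?_
    rintro y ⟨⟨k, hk⟩, hy2⟩
    rcases eq_or_ne y ∞ with rfl | hne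
    · exact mem_insert _ _
    · obtain ⟨x, hx⟩ := OnePoint.ne_infty_iff_exists.mp hne
      refine mem_insert_of_mem _ ⟨x, ⟨⟨k, hx ▸ hk⟩, fun hxA => hy2 (hcov ⟨x, hxA, hx⟩)⟩, hx⟩
  · intro hα
    refine ⟨fun A hA => hA.1, ?_, ?_, ?_⟩
    · intro A hA B hBA
      exact ⟨hA.1.mono hBA, lem1.mpr fun K hK =>
        ((lem1.mp hA.2 K hK)).subset (inter_subset_inter_left _ hBA)⟩
    · intro A hA B hB
      refine ⟨hA.1.union hB.1, lem1.mpr fun K hK => ?_⟩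
      rw [union_inter_distrib_right]
      exact (lem1.mp hA.2 K hK).union (lem1.mp hB.2 K hK)
    · intro Q hQP hQc
      by_cases hQ : Q.Nonempty
      · obtain ⟨B, rfl⟩ := hQc.exists_eq_range hQ
        have hBn : ∀ n, (B n).Countable ∧ IsClosed (B n) ∧ DiscreteTopology (B n) :=
          fun n => hQP (mem_range_self n)
        have hex : ∀ n, ∃ σ : ℕ → OnePoint X,
            Tendsto σ atTop (𝓝 ∞) ∧ (↑) '' (B n) ⊆ range σ :=
          fun n => lem4 (hBn n).1 (lem1.mp (hBn n).2)
        choose σ hσt hσc using hex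
        obtain ⟨τ, hτ, hfin⟩ := hα σ hσt
        refine ⟨(↑) ⁻¹' (range τ), ?_, ?_⟩
        · obtain ⟨h1, h2⟩ := lem5 hτ
          exact ⟨h1, lem1.mpr h2⟩
        · rintro B' ⟨n, rfl⟩
          have himg : ((↑) '' (B n \ ((↑) ⁻¹' (range τ))) : Set (OnePoint X)).Finite := by
            refine (hfin n).subset ?_
            rintro y ⟨x, ⟨hx1, hx2⟩, rfl⟩
            exact ⟨hσc n ⟨x, hx1, rfl⟩, hx2⟩
          exact Set.Finite.of_finite_image himg OnePoint.coe_injective.injOn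
      · rw [not_nonempty_iff_eq_empty] at hQ
        subst hQ
        refine ⟨∅, ⟨countable_empty, lem1.mpr fun K hK => by simp⟩,
          fun B hB => absurd hB (notMem_empty B)⟩
end

section
/- If the bounding number satisfies 𝔟 > ℵ₂, then there exists an (ℵ₂, λ)-gap in (ω^ω, ≤*) for some regular uncountable cardinal λ. -/
open Set Cardinal

/-- `f ≤* g`: `f n ≤ g n` for all but finitely many `n`. -/
def LeStar (f g : ℕ → ℕ) : Prop := {n | g n < f n}.Finite

/-- The bounding number 𝔟: the least cardinality of a family in `ℕ → ℕ` that is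
unbounded with respect to eventual domination. -/
noncomputable def boundingNumber : Cardinal.{0} :=
  sInf {c | ∃ F : Set (ℕ → ℕ), #F = c ∧ ¬ ∃ g : ℕ → ℕ, ∀ f ∈ F, LeStar f g}

theorem leStar_iff {f g : ℕ → ℕ} : LeStar f g ↔ ∃ N, ∀ n, N ≤ n → f n ≤ g n := by
  constructor
  · intro h
    rcases h.bddAbove with ⟨m, hm⟩
    refine ⟨m + 1, fun n hn => ?_⟩
    by_contra hc
    have := hm (show n ∈ {n | g n < f n} from not_le.mp hc)
    omega
  · rintro ⟨N, hN⟩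
    apply (Set.finite_Iio N).subset
    intro n hn
    simp only [Set.mem_setOf_eq] at hn
    simp only [Set.mem_Iio]
    by_contra hc
    exact absurd (hN n (not_lt.mp hc)) (not_le.mpr hn)

theorem leStar_of_forall {f g : ℕ → ℕ} (h : ∀ n, f n ≤ g n) : LeStar f g :=
  leStar_iff.mpr ⟨0, fun n _ => h n⟩

theorem leStar_refl (f : ℕ → ℕ) : LeStar f f := leStar_of_forall fun _ => le_rfl

theorem leStar_trans {f g h : ℕ → ℕ} (h1 : LeStar f g) (h2 : LeStar g h) : LeStar f h := by
  rw [leStar_iff] at *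
  obtain ⟨N1, h1⟩ := h1
  obtain ⟨N2, h2⟩ := h2
  exact ⟨max N1 N2, fun n hn => (h1 n (le_trans (le_max_left _ _) hn)).trans
    (h2 n (le_trans (le_max_right _ _) hn))⟩

theorem leStar_mono_right {f g g' : ℕ → ℕ} (h : ∀ n, g n ≤ g' n) (hf : LeStar f g) :
    LeStar f g' := leStar_trans hf (leStar_of_forall h)

theorem leStar_mono_left {f f' g : ℕ → ℕ} (h : ∀ n, f' n ≤ f n) (hf : LeStar f g) :
    LeStar f' g := leStar_trans (leStar_of_forall h) hf

noncomputable def mdown (h : ℕ → ℕ) : ℕ → ℕ := fun k => sInf (h '' Set.Ici k)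

theorem mdown_le (h : ℕ → ℕ) (k : ℕ) : mdown h k ≤ h k :=
  Nat.sInf_le ⟨k, Set.mem_Ici.mpr le_rfl, rfl⟩

theorem mdown_mono (h : ℕ → ℕ) : Monotone (mdown h) := by
  intro a b hab
  have hne : (h '' Set.Ici b).Nonempty := ⟨h b, b, Set.mem_Ici.mpr le_rfl, rfl⟩
  obtain ⟨j, hj, hje⟩ := Nat.sInf_mem hne
  show sInf (h '' Set.Ici a) ≤ sInf (h '' Set.Ici b)
  rw [show sInf (h '' Set.Ici b) = h j from hje.symm]
  exact Nat.sInf_le ⟨j, Set.mem_Ici.mpr (le_trans hab (Set.mem_Ici.mp hj)), rfl⟩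

theorem leStar_mdown {p t : ℕ → ℕ} (hp : Monotone p) (h : LeStar p t) : LeStar p (mdown t) := by
  rw [leStar_iff] at h ⊢
  obtain ⟨N, hN⟩ := h
  refine ⟨N, fun k hk => ?_⟩
  have hne : (t '' Set.Ici k).Nonempty := ⟨t k, k, Set.mem_Ici.mpr le_rfl, rfl⟩
  obtain ⟨j, hj, hje⟩ := Nat.sInf_mem hne
  show p k ≤ sInf (t '' Set.Ici k)
  rw [show sInf (t '' Set.Ici k) = t j from hje.symm]
  exact le_trans (hp (Set.mem_Ici.mp hj)) (hN j (hk.trans (Set.mem_Ici.mp hj)))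

def mup (h : ℕ → ℕ) : ℕ → ℕ := fun k => (Finset.range (k + 1)).sup h

theorem le_mup (h : ℕ → ℕ) (k : ℕ) : h k ≤ mup h k :=
  Finset.le_sup (Finset.mem_range.mpr (Nat.lt_succ_self k))

theorem mup_mono (h : ℕ → ℕ) : Monotone (mup h) := fun a b hab =>
  Finset.sup_mono (Finset.range_subset_range.mpr (by omega))

theorem bounded_of_small (hb : Cardinal.aleph 2 < boundingNumber)
    (F : Set (ℕ → ℕ)) (hF : #F ≤ Cardinal.aleph 2) :
    ∃ b : ℕ → ℕ, ∀ f ∈ F, LeStar f b := by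
  by_contra h
  have : boundingNumber ≤ #F := csInf_le' ⟨F, rfl, h⟩
  exact absurd (this.trans hF) (not_le.mpr hb)

theorem exists_monobound (hb : Cardinal.aleph 2 < boundingNumber)
    (F : Ordinal.{0} → ℕ → ℕ) (o : Ordinal.{0}) (ho : o ≤ (Cardinal.aleph 2).ord) :
    ∃ b : ℕ → ℕ, Monotone b ∧ ∀ γ < o, LeStar (F γ) b := by
  have hcard : #(F '' Set.Iio o) ≤ Cardinal.aleph 2 := by
    have h1 : Cardinal.lift.{1} #(F '' Set.Iio o) ≤ #(Set.Iio o) := by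
      simpa using Cardinal.mk_image_le_lift (f := F) (s := Set.Iio o)
    rw [Ordinal.mk_Iio_ordinal] at h1
    have h2 : o.card ≤ Cardinal.aleph 2 := by
      have := Ordinal.card_le_card ho
      rwa [Cardinal.card_ord] at this
    exact Cardinal.lift_le.mp (h1.trans (Cardinal.lift_le.mpr h2))
  obtain ⟨b0, hb0⟩ := bounded_of_small hb _ hcard
  refine ⟨mup b0, mup_mono b0, fun γ hγ => ?_⟩
  exact leStar_mono_right (le_mup b0) (hb0 (F γ) ⟨γ, hγ, rfl⟩)

attribute [local instance] Classical.propDecidable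

noncomputable def fSeq : Ordinal.{0} → ℕ → ℕ :=
  Ordinal.lt_wf.fix fun α prev =>
    if h : ∃ b, Monotone b ∧ ∀ γ (hγ : γ < α), LeStar (fun n => prev γ hγ n + 1) b
    then h.choose else fun _ => 0

theorem fSeq_def (α : Ordinal.{0}) : fSeq α =
    if h : ∃ b, Monotone b ∧ ∀ γ (_ : γ < α), LeStar (fun n => fSeq γ n + 1) b
    then h.choose else fun _ => 0 :=
  Ordinal.lt_wf.fix_eq _ α

theorem fSeq_spec (hb : Cardinal.aleph 2 < boundingNumber) {α : Ordinal.{0}}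
    (hα : α < (Cardinal.aleph 2).ord) :
    Monotone (fSeq α) ∧ ∀ γ, γ < α → LeStar (fun n => fSeq γ n + 1) (fSeq α) := by
  have hex : ∃ b, Monotone b ∧ ∀ γ (_ : γ < α), LeStar (fun n => fSeq γ n + 1) b := by
    obtain ⟨b, hb1, hb2⟩ := exists_monobound hb (fun γ n => fSeq γ n + 1) α hα.le
    exact ⟨b, hb1, fun γ hγ => hb2 γ hγ⟩
  rw [fSeq_def α, dif_pos hex]
  exact ⟨hex.choose_spec.1, fun γ hγ => hex.choose_spec.2 γ hγ⟩

theorem fSeq_le (hb : Cardinal.aleph 2 < boundingNumber) {γ α : Ordinal.{0}}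
    (h : γ ≤ α) (hα : α < (Cardinal.aleph 2).ord) : LeStar (fSeq γ) (fSeq α) := by
  rcases eq_or_lt_of_le h with rfl | hlt
  · exact leStar_refl _
  · exact leStar_mono_left (fun n => Nat.le_succ _) ((fSeq_spec hb hα).2 γ hlt)

def PUpper (t : ℕ → ℕ) : Prop := ∀ α < (Cardinal.aleph 2).ord, LeStar (fSeq α) t

noncomputable def gSeq : Ordinal.{0} → ℕ → ℕ :=
  Ordinal.lt_wf.fix fun β prev =>
    if h : ∃ t, PUpper t ∧ ∀ γ (hγ : γ < β), LeStar t (prev γ hγ)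
    then fun k => mdown h.choose k - 1 else fun _ => 0

def Good (β : Ordinal.{0}) : Prop := ∃ t, PUpper t ∧ ∀ γ, γ < β → LeStar t (gSeq γ)

theorem gSeq_def (β : Ordinal.{0}) :
    gSeq β = if h : Good β then fun k => mdown h.choose k - 1 else fun _ => 0 :=
  Ordinal.lt_wf.fix_eq _ β

theorem ord_limit : Order.IsSuccLimit ((Cardinal.aleph 2).ord) :=
  Cardinal.isSuccLimit_ord (Cardinal.aleph0_le_aleph 2)

theorem pupper_mdown_succ (hb : Cardinal.aleph 2 < boundingNumber) {t : ℕ → ℕ}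
    (ht : PUpper t) {α : Ordinal.{0}} (hα : α < (Cardinal.aleph 2).ord) :
    LeStar (fun n => fSeq α n + 1) (mdown t) := by
  have hsucc : Order.succ α < (Cardinal.aleph 2).ord := ord_limit.succ_lt hα
  have h1 : LeStar (fun n => fSeq α n + 1) (fSeq (Order.succ α)) :=
    (fSeq_spec hb hsucc).2 α (Order.lt_succ α)
  have h2 : LeStar (fun n => fSeq α n + 1) t := leStar_trans h1 (ht _ hsucc)
  exact leStar_mdown (fun a b hab => by
    have := (fSeq_spec hb hα).1 hab
    omega) h2

theorem gSeq_spec (hb : Cardinal.aleph 2 < boundingNumber) {β : Ordinal.{0}} (hG : Good β) :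
    PUpper (gSeq β) ∧ (∀ γ, γ < β → LeStar (gSeq β) (gSeq γ)) ∧ Monotone (gSeq β) ∧
      (∀ γ, γ < β → ¬ LeStar (gSeq γ) (gSeq β)) := by
  have hEq : gSeq β = fun k => mdown hG.choose k - 1 := by rw [gSeq_def β, dif_pos hG]
  obtain ⟨ht1, ht2⟩ := hG.choose_spec
  set t := hG.choose with hts
  have hup : PUpper (gSeq β) := by
    intro α hα
    have := leStar_iff.mp (pupper_mdown_succ hb ht1 hα)
    obtain ⟨N, hN⟩ := this
    rw [hEq, leStar_iff]
    exact ⟨N, fun k hk => by have := hN k hk; beta_reduce at this ⊢; omega⟩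
  have hdec : ∀ γ, γ < β → LeStar (gSeq β) (gSeq γ) := by
    intro γ hγ
    rw [hEq]
    refine leStar_trans (leStar_of_forall fun k => ?_) (ht2 γ hγ)
    have := mdown_le t k
    omega
  refine ⟨hup, hdec, ?_, ?_⟩
  · rw [hEq]
    intro a b hab
    show mdown t a - 1 ≤ mdown t b - 1
    have := mdown_mono t hab
    omega
  · intro γ hγ hcon
    obtain ⟨N1, hN1⟩ := leStar_iff.mp hcon
    obtain ⟨N2, hN2⟩ := leStar_iff.mp (leStar_trans
      (leStar_of_forall (mdown_le t)) (ht2 γ hγ))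
    have h0 : (0 : Ordinal) < (Cardinal.aleph 2).ord := ord_limit.pos
    obtain ⟨N3, hN3⟩ := leStar_iff.mp (pupper_mdown_succ hb ht1 h0)
    set k := max N1 (max N2 N3) with hk
    have e1 := hN1 k (le_max_left _ _)
    have e2 := hN2 k (le_trans (le_max_left _ _) (le_max_right _ _))
    have e3 := hN3 k (le_trans (le_max_right _ _) (le_max_right _ _))
    rw [hEq] at e1
    simp only [] at e1 e2 e3
    omega

theorem good_mono {β γ : Ordinal.{0}} (h : Good β) (hle : γ ≤ β) : Good γ := by
  obtain ⟨t, ht1, ht2⟩ := h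
  exact ⟨t, ht1, fun δ hδ => ht2 δ (lt_of_lt_of_le hδ hle)⟩

theorem good_zero (hb : Cardinal.aleph 2 < boundingNumber) : Good 0 := by
  obtain ⟨b, _, hb2⟩ := exists_monobound hb fSeq (Cardinal.aleph 2).ord le_rfl
  exact ⟨b, fun α hα => hb2 α hα, fun γ hγ => absurd hγ (not_lt_zero' (a := γ))⟩

theorem good_succ (hb : Cardinal.aleph 2 < boundingNumber) {β : Ordinal.{0}} (h : Good β) :
    Good (Order.succ β) := by
  obtain ⟨hup, hdec, -, -⟩ := gSeq_spec hb h
  refine ⟨gSeq β, hup, fun γ hγ => ?_⟩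
  rcases eq_or_lt_of_le (Order.lt_succ_iff.mp hγ) with rfl | hlt
  · exact leStar_refl _
  · exact hdec γ hlt

theorem exists_not_good (hb : Cardinal.aleph 2 < boundingNumber) : ∃ β : Ordinal.{0}, ¬ Good β := by
  by_contra h
  push_neg at h
  set O : Ordinal.{0} := (Order.succ #(ℕ → ℕ)).ord with hO
  have hinj : Function.Injective (fun x : Set.Iio O => gSeq x.1) := by
    rintro ⟨x, hx⟩ ⟨y, hy⟩ heq
    simp only [] at heq
    by_contra hne
    have hne' : x ≠ y := fun hxy => hne (by simp [hxy])
    rcases lt_or_gt_of_ne hne' with hlt | hlt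
    · exact (gSeq_spec hb (h y)).2.2.2 x hlt (heq ▸ leStar_refl _)
    · exact (gSeq_spec hb (h x)).2.2.2 y hlt (heq ▸ leStar_refl _)
  have hle : Cardinal.lift.{0} #(Set.Iio O) ≤ Cardinal.lift.{1} #(ℕ → ℕ) :=
    Cardinal.lift_mk_le'.mpr ⟨⟨_, hinj⟩⟩
  rw [Ordinal.mk_Iio_ordinal, Cardinal.lift_lift, Cardinal.card_ord] at hle
  have := Cardinal.lift_le.mp hle
  exact absurd this (not_le.mpr (Order.lt_succ _))

theorem interp (hb : Cardinal.aleph 2 < boundingNumber) (gs : ℕ → ℕ → ℕ)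
    (hgs : ∀ n, PUpper (gs n)) :
    ∃ t : ℕ → ℕ, PUpper t ∧ ∀ n, LeStar t (gs n) := by
  set H2 : Ordinal.{0} → ℕ → ℕ :=
    fun α n => sInf {N | ∀ k, N ≤ k → fSeq α k ≤ gs n k} with hH2def
  have hH2spec : ∀ α, α < (Cardinal.aleph 2).ord → ∀ n k, H2 α n ≤ k → fSeq α k ≤ gs n k := by
    intro α hα n
    have hne : {N | ∀ k, N ≤ k → fSeq α k ≤ gs n k}.Nonempty := by
      obtain ⟨N, hN⟩ := leStar_iff.mp (hgs n α hα)
      exact ⟨N, hN⟩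
    exact fun k hk => Nat.sInf_mem hne k hk
  obtain ⟨H, -, hH⟩ := exists_monobound hb H2 (Cardinal.aleph 2).ord le_rfl
  refine ⟨fun k => (insert 0 ((Finset.range (k + 1)).filter fun n => H n ≤ k)).inf'
      (Finset.insert_nonempty _ _) (fun n => gs n k), ?_, ?_⟩
  · intro α hα
    obtain ⟨N, hN⟩ := leStar_iff.mp (hH α hα)
    rw [leStar_iff]
    refine ⟨(Finset.range (N + 1)).sup (H2 α), fun k hk => ?_⟩
    obtain ⟨m, hm, hmeq⟩ := Finset.exists_mem_eq_inf'
      (Finset.insert_nonempty 0 ((Finset.range (k + 1)).filter fun n => H n ≤ k))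
      (fun n => gs n k)
    rw [hmeq]
    by_cases hmN : m ≤ N
    · exact hH2spec α hα m k (le_trans
        (Finset.le_sup (Finset.mem_range.mpr (by omega))) hk)
    · have hm' : H m ≤ k := by
        rcases Finset.mem_insert.mp hm with h0 | hf
        · omega
        · exact (Finset.mem_filter.mp hf).2
      exact hH2spec α hα m k (le_trans (hN m (by omega)) hm')
  · intro n
    rw [leStar_iff]
    refine ⟨max (n + 1) (H n), fun k hk => ?_⟩
    have hmem : n ∈ insert 0 ((Finset.range (k + 1)).filter fun m => H m ≤ k) :=
      Finset.mem_insert_of_mem (Finset.mem_filter.mpr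
        ⟨Finset.mem_range.mpr (by omega), by omega⟩)
    exact Finset.inf'_le _ hmem

/-- `(f, g)` (indexed by the ordinals below `κ.ord`, `lam.ord`) is a `(κ, λ)`-pregap. -/
def IsPregap (κ lam : Cardinal.{0}) (f g : Ordinal → ℕ → ℕ) : Prop :=
  (∀ α < κ.ord, Monotone (f α)) ∧
  (∀ β < lam.ord, Monotone (g β)) ∧
  (∀ α₁ α₂ : Ordinal, α₁ ≤ α₂ → α₂ < κ.ord → LeStar (f α₁) (f α₂)) ∧
  (∀ β₁ β₂ : Ordinal, β₁ ≤ β₂ → β₂ < lam.ord → LeStar (g β₂) (g β₁)) ∧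
  (∀ α < κ.ord, ∀ β < lam.ord, LeStar (f α) (g β))

/-- A `(κ, λ)`-pregap is a gap if no `h` interpolates between the two sides. -/
def IsGap (κ lam : Cardinal.{0}) (f g : Ordinal → ℕ → ℕ) : Prop :=
  IsPregap κ lam f g ∧
    ¬ ∃ h : ℕ → ℕ, (∀ α < κ.ord, LeStar (f α) h) ∧ ∀ β < lam.ord, LeStar h (g β)

/-- If `𝔟 > ℵ₂` then there is an `(ℵ₂, λ)`-gap for some regular uncountable `λ`. -/
theorem exists_aleph2_gap_of_b_gt_aleph2 (hb : Cardinal.aleph 2 < boundingNumber) :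
    ∃ lam : Cardinal.{0}, lam.IsRegular ∧ Cardinal.aleph0 < lam ∧
      ∃ f g : Ordinal → ℕ → ℕ, IsGap (Cardinal.aleph 2) lam f g := by
  obtain ⟨β1, hβ1⟩ := exists_not_good hb
  set S : Set Ordinal.{0} := {β | ¬ Good β} with hS
  have hSne : S.Nonempty := ⟨β1, hβ1⟩
  set β₀ := Ordinal.lt_wf.min S hSne with hβ₀def
  have hβ₀ : ¬ Good β₀ := Ordinal.lt_wf.min_mem S hSne
  have hmin : ∀ γ, γ < β₀ → Good γ := by
    intro γ hγ
    by_contra hg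
    exact Ordinal.lt_wf.not_lt_min S hg hγ
  have key : ∀ δ, δ < β₀ → ∀ γ, γ ≤ δ → LeStar (gSeq δ) (gSeq γ) := by
    intro δ hδ γ hγle
    rcases eq_or_lt_of_le hγle with rfl | hlt
    · exact leStar_refl _
    · exact (gSeq_spec hb (hmin δ hδ)).2.1 γ hlt
  have hlim : Order.IsSuccLimit β₀ := by
    refine Ordinal.isSuccLimit_iff.mpr ⟨fun h0 => hβ₀ (h0 ▸ good_zero hb), Order.isSuccPrelimit_of_succ_lt fun a ha => ?_⟩
    by_contra hc
    push_neg at hc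
    have heq : β₀ = Order.succ a := le_antisymm hc (Order.succ_le_of_lt ha)
    exact hβ₀ (heq ▸ good_succ hb (hmin a ha))
  obtain ⟨c, hc⟩ := Ordinal.exists_fundamental_sequence β₀
  have hcof : ∀ γ, γ < β₀ → ∃ i, ∃ hi : i < β₀.cof.ord, γ ≤ c i hi := by
    intro γ hγ
    rw [← hc.blsub_eq] at hγ
    exact Ordinal.lt_blsub_iff.mp hγ
  have hcof_le : Cardinal.aleph0 ≤ β₀.cof := Ordinal.aleph0_le_cof.2 hlim
  have huncount : Cardinal.aleph0 < β₀.cof := by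
    rcases lt_or_eq_of_le hcof_le with h | h
    · exact h
    · exfalso
      have hω : β₀.cof.ord = Ordinal.omega0 := by rw [← h, Cardinal.ord_aleph0]
      have hnat : ∀ n : ℕ, (n : Ordinal.{0}) < β₀.cof.ord := by
        intro n; rw [hω]; exact Ordinal.nat_lt_omega0 n
      set gs : ℕ → ℕ → ℕ := fun n => gSeq (c n (hnat n)) with hgs_def
      have hgsU : ∀ n, PUpper (gs n) := fun n => (gSeq_spec hb (hmin _ (hc.lt _))).1
      obtain ⟨t, ht1, ht2⟩ := interp hb gs hgsU
      apply hβ₀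
      refine ⟨t, ht1, fun γ hγ => ?_⟩
      obtain ⟨i, hi, hle⟩ := hcof γ hγ
      obtain ⟨n, rfl⟩ := Ordinal.lt_omega0.mp (hω ▸ hi)
      exact leStar_trans (ht2 n) (key _ (hc.lt hi) γ hle)
  refine ⟨β₀.cof, Cardinal.isRegular_cof hlim, huncount, fSeq,
    (fun ξ => if hξ : ξ < β₀.cof.ord then gSeq (c ξ hξ) else gSeq 0), ⟨?_, ?_, ?_, ?_, ?_⟩, ?_⟩
  · intro α hα
    exact (fSeq_spec hb hα).1
  · intro ξ hξ
    simp only [dif_pos hξ]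
    exact (gSeq_spec hb (hmin _ (hc.lt hξ))).2.2.1
  · intro α₁ α₂ h12 h2
    exact fSeq_le hb h12 h2
  · intro ξ₁ ξ₂ h12 h2
    have h1 : ξ₁ < β₀.cof.ord := lt_of_le_of_lt h12 h2
    simp only [dif_pos h1, dif_pos h2]
    exact key _ (hc.lt h2) _ (hc.monotone h1 h2 h12)
  · intro α hα ξ hξ
    simp only [dif_pos hξ]
    exact (gSeq_spec hb (hmin _ (hc.lt hξ))).1 α hα
  · rintro ⟨h, hh1, hh2⟩
    apply hβ₀
    refine ⟨h, hh1, fun γ hγ => ?_⟩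
    obtain ⟨i, hi, hle⟩ := hcof γ hγ
    have hthis := hh2 i hi
    simp only [dif_pos hi] at hthis
    exact leStar_trans hthis (key _ (hc.lt hi) γ hle)
end
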